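/- If a lattice L satisfies the identities (L2), (U), and (B), then there exist a tree-like poset Γ of length at most 2 and a lattice embedding φ : L → Co(Γ) that preserves the least and greatest elements of L whenever they exist; moreover, if L is finite then Γ can be taken finite. -/

import Mathlib

/-! Common definitions: lattices of order-convex subsets of a poset,
length of a poset, the identities (S), (U), (B), (L2), (H_n), (H_{m,n}),
join-irreducibility, the join-dependency relation, join-seeds,
the posets P_{I,J}, tree-like posets, D-closed sets,
and complete lattice congruences. -/

open Set

/-- The lattice `Co P` of all order-convex subsets of a poset `P`. -/
def Co (P : Type*) [PartialOrder P] : Type _ := {s : Set P // s.OrdConnected}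

namespace Co

variable {P : Type*} [PartialOrder P]

instance : PartialOrder (Co P) := Subtype.partialOrder _

instance : InfSet (Co P) :=
  ⟨fun S => ⟨⋂ s ∈ S, s.1, Set.ordConnected_biInter fun s _ => s.2⟩⟩

noncomputable instance : CompleteLattice (Co P) :=
  completeLatticeOfInf (Co P) (by
    intro S
    constructor
    · intro t ht
      exact Set.biInter_subset_of_mem (t := fun s => s.1) ht
    · intro b hb
      exact Set.subset_iInter₂ fun t ht => hb ht)

/-- The order-convex subset of `P` with underlying set `X`. -/
def mk' (X : Set P) (hX : X.OrdConnected) : Co P := ⟨X, hX⟩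

/-- The singleton `{p}`, as an order-convex set. -/
def sngl (p : P) : Co P := ⟨{p}, Set.ordConnected_singleton⟩

/-- The empty order-convex set. -/
def emp : Co P := ⟨∅, Set.ordConnected_empty⟩

end Co

/-- `lengthLE P n` states that the poset `P` has length at most `n`, that is,
every finite chain of `P` has at most `n + 1` elements. -/
def lengthLE (P : Type*) [PartialOrder P] (n : ℕ) : Prop :=
  ∀ C : Finset P, IsChain (· ≤ ·) (C : Set P) → C.card ≤ n + 1

section Identities

/-- The Stirlitz identity (S). -/
def IdS (L : Type*) [Lattice L] : Prop :=
  ∀ a b b₀ b₁ c : L,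
    a ⊓ ((b ⊓ (b₀ ⊔ b₁)) ⊔ c) =
      (a ⊓ (b ⊓ (b₀ ⊔ b₁)))
      ⊔ (a ⊓ (b₀ ⊔ c) ⊓ ((b ⊓ (b₀ ⊔ b₁) ⊓ (a ⊔ b₀)) ⊔ c))
      ⊔ (a ⊓ (b₁ ⊔ c) ⊓ ((b ⊓ (b₀ ⊔ b₁) ⊓ (a ⊔ b₁)) ⊔ c))

/-- The Udav identity (U). -/
def IdU (L : Type*) [Lattice L] : Prop :=
  ∀ x x₀ x₁ x₂ : L,
    x ⊓ (x₀ ⊔ x₁) ⊓ (x₁ ⊔ x₂) ⊓ (x₀ ⊔ x₂) =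
      (x ⊓ x₀ ⊓ (x₁ ⊔ x₂)) ⊔ (x ⊓ x₁ ⊓ (x₀ ⊔ x₂)) ⊔ (x ⊓ x₂ ⊓ (x₀ ⊔ x₁))

/-- The Bond identity (B). -/
def IdB (L : Type*) [Lattice L] : Prop :=
  ∀ x a₀ a₁ b₀ b₁ : L,
    x ⊓ (a₀ ⊔ a₁) ⊓ (b₀ ⊔ b₁) =
      (x ⊓ a₀ ⊓ (b₀ ⊔ b₁)) ⊔ (x ⊓ a₁ ⊓ (b₀ ⊔ b₁))
      ⊔ (x ⊓ b₀ ⊓ (a₀ ⊔ a₁)) ⊔ (x ⊓ b₁ ⊓ (a₀ ⊔ a₁))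
      ⊔ (x ⊓ (a₀ ⊔ a₁) ⊓ (b₀ ⊔ b₁) ⊓ (a₀ ⊔ b₀) ⊓ (a₁ ⊔ b₁))
      ⊔ (x ⊓ (a₀ ⊔ a₁) ⊓ (b₀ ⊔ b₁) ⊓ (a₀ ⊔ b₁) ⊓ (a₁ ⊔ b₀))

/-- The identity (L₂). -/
def IdL2 (L : Type*) [Lattice L] : Prop :=
  ∀ a b b' c c' : L,
    a ⊓ ((b ⊓ (c ⊔ c')) ⊔ b') =
      (a ⊓ b ⊓ (c ⊔ c')) ⊔ (a ⊓ ((b ⊓ c) ⊔ b')) ⊔ (a ⊓ ((b ⊓ c') ⊔ b'))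

variable {L : Type*} [Lattice L]

/-- The lattice polynomial `U_{i,n}` (in the variables `x₀, …, xₙ, x'₁, …, x'ₙ`). -/
def Upoly (x x' : ℕ → L) (n : ℕ) (i : ℕ) : L :=
  if h : n ≤ i then x n
  else x i ⊓ (Upoly x x' n (i + 1) ⊔ x' (i + 1))
  termination_by n - i
  decreasing_by omega

/-- The lattice polynomial `V_{i,j,n}`. -/
def Vpoly (x x' : ℕ → L) (n i : ℕ) (j : ℕ) : L :=
  if h : i ≤ j then (x i ⊓ Upoly x x' n (i + 1)) ⊔ (x i ⊓ x' (i + 1))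
  else x j ⊓ (Vpoly x x' n i (j + 1) ⊔ x' (j + 1))
  termination_by i - j
  decreasing_by omega

/-- The lattice polynomial `W_{i,j,n}`. -/
def Wpoly (x x' : ℕ → L) (n i : ℕ) (j : ℕ) : L :=
  if h : i ≤ j then
    x i ⊓ (x' (i + 1) ⊔ x' (i + 2)) ⊓ ((Upoly x x' n (i + 1) ⊓ (x i ⊔ x' (i + 2))) ⊔ x' (i + 1))
  else x j ⊓ (Wpoly x x' n i (j + 1) ⊔ x' (j + 1))
  termination_by i - j
  decreasing_by omega

/-- `bigJoin f k = f 0 ⊔ f 1 ⊔ ⋯ ⊔ f k`. -/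
def bigJoin (f : ℕ → L) : ℕ → L
  | 0 => f 0
  | k + 1 => bigJoin f k ⊔ f (k + 1)

end Identities

/-- The identity (Hₙ) : `Uₙ = ⋁_{0 ≤ i ≤ n-1} V_{i,n} ∨ ⋁_{0 ≤ i ≤ n-2} W_{i,n}`
(intended for `n ≥ 1`). -/
def IdH (n : ℕ) (L : Type*) [Lattice L] : Prop :=
  ∀ x x' : ℕ → L,
    Upoly x x' n 0 =
      bigJoin (fun i =>
        if i + 2 ≤ n then Vpoly x x' n i 0 ⊔ Wpoly x x' n i 0 else Vpoly x x' n i 0) (n - 1)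

/-- The identity (H_{m,n}) (intended for `m, n ≥ 1`); the common base point is
`x 0 = y 0 = t`. -/
def IdHmn (m n : ℕ) (L : Type*) [Lattice L] : Prop :=
  ∀ x x' y y' : ℕ → L, x 0 = y 0 →
    Upoly x x' m 0 ⊓ Upoly y y' n 0 =
      bigJoin (fun i =>
          if i + 2 ≤ m then
            (Vpoly x x' m i 0 ⊓ Upoly y y' n 0) ⊔ (Wpoly x x' m i 0 ⊓ Upoly y y' n 0)
          else Vpoly x x' m i 0 ⊓ Upoly y y' n 0) (m - 1)
      ⊔ bigJoin (fun j =>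
          if j + 2 ≤ n then
            (Upoly x x' m 0 ⊓ Vpoly y y' n j 0) ⊔ (Upoly x x' m 0 ⊓ Wpoly y y' n j 0)
          else Upoly x x' m 0 ⊓ Vpoly y y' n j 0) (n - 1)
      ⊔ (Upoly x x' m 0 ⊓ Upoly y y' n 0 ⊓ (x 1 ⊔ y' 1) ⊓ (x' 1 ⊔ y 1))

/-- `p` is join-irreducible: `p = x ⊔ y` implies `p = x` or `p = y`. -/
def JIrr {L : Type*} [Lattice L] (p : L) : Prop :=
  ∀ x y : L, p = x ⊔ y → p = x ∨ p = y

/-- The join-dependency relation `p D q`. -/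
def DRel {L : Type*} [Lattice L] (p q : L) : Prop :=
  p ≠ q ∧ ∃ x : L, p ≤ q ⊔ x ∧ ∀ y < q, ¬ p ≤ y ⊔ x

/-- A subset `S` of a lattice `L` is a join-seed. -/
def JoinSeed (L : Type*) [Lattice L] (S : Set L) : Prop :=
  (∀ p ∈ S, JIrr p) ∧
  (∀ a : L, ∃ T ⊆ S, IsLUB T a) ∧
  (∀ p ∈ S, ∀ a b : L, p ≤ a ⊔ b → ¬ p ≤ a → ¬ p ≤ b →
    ∃ x ∈ S, ∃ y ∈ S, x ≤ a ∧ y ≤ b ∧ p ≤ x ⊔ y ∧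
      (∀ x' < x, ¬ p ≤ x' ⊔ y) ∧ (∀ y' < y, ¬ p ≤ x ⊔ y'))

/-- The poset `P_{I,J} = I ∪ {p} ∪ J`, where every element of `I` is below `p`,
`p` is below every element of `J`, every element of `I` is below every element
of `J`, and there are no other strict comparabilities. -/
def PIJ (I J : Type*) : Type _ := I ⊕ (Unit ⊕ J)

namespace PIJ

variable {I J : Type*}

/-- The rank (height) of an element of `P_{I,J}`. -/
def rank (a : PIJ I J) : ℕ :=
  Sum.elim (fun _ => 0) (Sum.elim (fun _ => 1) fun _ => 2) a

instance : PartialOrder (PIJ I J) where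
  le a b := a = b ∨ rank a < rank b
  le_refl a := Or.inl rfl
  le_trans a b c hab hbc := by
    rcases hab with rfl | h
    · exact hbc
    · rcases hbc with rfl | h'
      · exact Or.inr h
      · exact Or.inr (h.trans h')
  le_antisymm a b hab hba := by
    rcases hab with rfl | h
    · rfl
    · rcases hba with rfl | h'
      · rfl
      · omega

end PIJ

/-- A poset is tree-like if it has no infinite bounded chain and between any two
points there is at most one repetition-free finite path with respect to the
covering relation. -/
def TreeLike (P : Type*) [PartialOrder P] : Prop :=
  (∀ C : Set P, IsChain (· ≤ ·) C → BddAbove C → BddBelow C → C.Finite) ∧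
  (∀ a b : P, ∀ l₁ l₂ : List P,
    l₁.Nodup → l₁.head? = some a → l₁.getLast? = some b →
      l₁.Chain' (fun u v => u ⋖ v ∨ v ⋖ u) →
    l₂.Nodup → l₂.head? = some a → l₂.getLast? = some b →
      l₂.Chain' (fun u v => u ⋖ v ∨ v ⋖ u) →
    l₁ = l₂)

/-- A subset `U` of a poset `P` is `D`-closed. -/
def DClosed {P : Type*} [PartialOrder P] (U : Set P) : Prop :=
  ∀ x p y : P, x < p → p < y → (x ∈ U ∨ y ∈ U) → p ∈ U

/-- A complete congruence of a complete lattice. -/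
structure IsCompleteCongr {L : Type*} [CompleteLattice L] (θ : L → L → Prop) : Prop where
  refl : ∀ x, θ x x
  symm : ∀ {x y}, θ x y → θ y x
  trans : ∀ {x y z}, θ x y → θ y z → θ x z
  sup : ∀ {a b c d}, θ a b → θ c d → θ (a ⊔ c) (b ⊔ d)
  inf : ∀ {a b c d}, θ a b → θ c d → θ (a ⊓ c) (b ⊓ d)
  cSup : ∀ (x : L) (Y : Set L), Y.Nonempty → (∀ y ∈ Y, θ x y) → θ x (sSup Y)
  cInf : ∀ (x : L) (Y : Set L), Y.Nonempty → (∀ y ∈ Y, θ x y) → θ x (sInf Y)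

/-- The map `h_U : Co(P) → Co(P ∖ U)`, `X ↦ X ∖ U`. -/
def coRestrict {P : Type*} [PartialOrder P] (U : Set P) (X : Co P) :
    Co {p : P // p ∉ U} :=
  ⟨Subtype.val ⁻¹' X.1, by
    constructor
    rintro a ha b hb z hz
    exact X.2.out ha hb ⟨hz.1, hz.2⟩⟩

/-- The lattice `D(P)` of all `D`-closed subsets of a poset `P`. -/
def DSub (P : Type*) [PartialOrder P] : Type _ := {U : Set P // DClosed U}

namespace DSub

variable {P : Type*} [PartialOrder P]

instance : PartialOrder (DSub P) := Subtype.partialOrder _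

instance : InfSet (DSub P) :=
  ⟨fun S => ⟨⋂ U ∈ S, U.1, by
    intro x p y h1 h2 h3
    simp only [Set.mem_iInter] at h3 ⊢
    intro U hU
    exact U.2 x p y h1 h2 (h3.imp (fun h => h U hU) fun h => h U hU)⟩⟩

noncomputable instance : CompleteLattice (DSub P) :=
  completeLatticeOfInf (DSub P) (by
    intro S
    constructor
    · intro t ht
      exact Set.biInter_subset_of_mem (t := fun U => U.1) ht
    · intro b hb
      exact Set.subset_iInter₂ fun t ht => hb ht)

end DSub


/-! ### Auxiliary development for Statement 2 (Semenova–Wehrung style) -/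

universe u_aux

/-! ### Auxiliary development for Statement 2 -/

section SWAux
variable {L : Type*} [Lattice L]

/-- A (possibly empty or improper) filter of a lattice. -/
def IsFilt (F : Set L) : Prop :=
  (∀ x y : L, x ∈ F → x ≤ y → y ∈ F) ∧ (∀ x y : L, x ∈ F → y ∈ F → x ⊓ y ∈ F)

/-- A join-prime subset. -/
def IsPrimeSet (F : Set L) : Prop := ∀ x y : L, x ⊔ y ∈ F → x ∈ F ∨ y ∈ F

theorem exists_max_filter {a b : L} (hab : ¬ a ≤ b) :
    ∃ F : Set L, IsFilt F ∧ a ∈ F ∧ b ∉ F ∧ ∀ x ∉ F, ∃ f ∈ F, f ⊓ x ≤ b := by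
  obtain ⟨M, -, hM⟩ := zorn_subset_nonempty
      {F : Set L | IsFilt F ∧ a ∈ F ∧ b ∉ F}
      (fun c hc hchain hcne => by
        refine ⟨⋃₀ c, ⟨⟨?_, ?_⟩, ?_, ?_⟩, fun s hs => subset_sUnion_of_mem hs⟩
        · rintro x y ⟨s, hs, hxs⟩ hxy
          exact ⟨s, hs, (hc hs).1.1 x y hxs hxy⟩
        · rintro x y ⟨s, hs, hxs⟩ ⟨t, ht, hyt⟩
          rcases hchain.total hs ht with h | h
          · exact ⟨t, ht, (hc ht).1.2 x y (h hxs) hyt⟩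
          · exact ⟨s, hs, (hc hs).1.2 x y hxs (h hyt)⟩
        · obtain ⟨s, hs⟩ := hcne
          exact ⟨s, hs, (hc hs).2.1⟩
        · rintro ⟨s, hs, hbs⟩
          exact (hc hs).2.2 hbs)
      {x : L | a ≤ x} ⟨⟨fun x y hx hxy => hx.trans hxy, fun x y hx hy => le_inf hx hy⟩,
        le_refl a, hab⟩
  obtain ⟨⟨hMf, haM, hbM⟩, hmax⟩ := hM
  refine ⟨M, hMf, haM, hbM, fun x hx => ?_⟩
  by_contra hcon
  push_neg at hcon
  have hsub : M ⊆ {y : L | ∃ f ∈ M, f ⊓ x ≤ y} := fun y hy => ⟨y, hy, inf_le_left⟩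
  have h2 : {y : L | ∃ f ∈ M, f ⊓ x ≤ y} ⊆ M := by
    refine hmax ⟨⟨?_, ?_⟩, hsub haM, ?_⟩ hsub
    · rintro y z ⟨f, hf, hfy⟩ hyz
      exact ⟨f, hf, hfy.trans hyz⟩
    · rintro y z ⟨f, hf, hfy⟩ ⟨g, hg, hgz⟩
      exact ⟨f ⊓ g, hMf.2 f g hf hg, le_inf ((inf_le_inf_right x inf_le_left).trans hfy)
        ((inf_le_inf_right x inf_le_right).trans hgz)⟩
    · rintro ⟨f, hf, hfb⟩
      exact hcon f hf hfb
  exact hx (h2 ⟨a, haM, inf_le_right⟩)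

theorem tri (hU : IdU L) {F : Set L} {b : L} (hF : IsFilt F) (hbF : b ∉ F)
    (hmax : ∀ x ∉ F, ∃ f ∈ F, f ⊓ x ≤ b)
    {x0 x1 x2 : L} (h0 : x0 ∉ F) (h1 : x1 ∉ F) (h2 : x2 ∉ F)
    (e01 : x0 ⊔ x1 ∈ F) (e12 : x1 ⊔ x2 ∈ F) (e02 : x0 ⊔ x2 ∈ F) : False := by
  obtain ⟨f0, hf0, hb0⟩ := hmax x0 h0
  obtain ⟨f1, hf1, hb1⟩ := hmax x1 h1
  obtain ⟨f2, hf2, hb2⟩ := hmax x2 h2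
  set x := f0 ⊓ (f1 ⊓ f2) with hxdef
  have hxF : x ∈ F := hF.2 _ _ hf0 (hF.2 _ _ hf1 hf2)
  have hyF : x ⊓ (x0 ⊔ x1) ⊓ (x1 ⊔ x2) ⊓ (x0 ⊔ x2) ∈ F :=
    hF.2 _ _ (hF.2 _ _ (hF.2 _ _ hxF e01) e12) e02
  rw [hU x x0 x1 x2] at hyF
  have hle : (x ⊓ x0 ⊓ (x1 ⊔ x2)) ⊔ (x ⊓ x1 ⊓ (x0 ⊔ x2)) ⊔ (x ⊓ x2 ⊓ (x0 ⊔ x1)) ≤ b := by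
    refine sup_le (sup_le ?_ ?_) ?_
    · exact le_trans inf_le_left (le_trans (inf_le_inf_right _ inf_le_left) hb0)
    · exact le_trans inf_le_left
        (le_trans (inf_le_inf_right _ (le_trans inf_le_right inf_le_left)) hb1)
    · exact le_trans inf_le_left
        (le_trans (inf_le_inf_right _ (le_trans inf_le_right inf_le_right)) hb2)
  exact hbF (hF.1 _ _ hyF hle)

theorem bond (hB : IdB L) {F : Set L} {b : L} (hF : IsFilt F) (hbF : b ∉ F)
    (hmax : ∀ x ∉ F, ∃ f ∈ F, f ⊓ x ≤ b)
    {a0 a1 b0 b1 : L} (ha0 : a0 ∉ F) (ha1 : a1 ∉ F) (hc0 : b0 ∉ F) (hc1 : b1 ∉ F)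
    (ea : a0 ⊔ a1 ∈ F) (eb : b0 ⊔ b1 ∈ F)
    (h00 : a0 ⊔ b0 ∉ F) (h01 : a0 ⊔ b1 ∉ F) : False := by
  obtain ⟨fa0, hfa0, hba0⟩ := hmax a0 ha0
  obtain ⟨fa1, hfa1, hba1⟩ := hmax a1 ha1
  obtain ⟨fb0, hfb0, hbb0⟩ := hmax b0 hc0
  obtain ⟨fb1, hfb1, hbb1⟩ := hmax b1 hc1
  obtain ⟨g0, hg0, hbg0⟩ := hmax _ h00
  obtain ⟨g1, hg1, hbg1⟩ := hmax _ h01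
  set x := fa0 ⊓ (fa1 ⊓ (fb0 ⊓ (fb1 ⊓ (g0 ⊓ g1)))) with hxdef
  have hxF : x ∈ F := hF.2 _ _ hfa0 (hF.2 _ _ hfa1 (hF.2 _ _ hfb0 (hF.2 _ _ hfb1
    (hF.2 _ _ hg0 hg1))))
  have hx0 : x ≤ fa0 := inf_le_left
  have hx1 : x ≤ fa1 := inf_le_right.trans inf_le_left
  have hx2 : x ≤ fb0 := inf_le_right.trans (inf_le_right.trans inf_le_left)
  have hx3 : x ≤ fb1 := inf_le_right.trans (inf_le_right.trans (inf_le_right.trans inf_le_left))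
  have hx4 : x ≤ g0 := inf_le_right.trans (inf_le_right.trans (inf_le_right.trans
    (inf_le_right.trans inf_le_left)))
  have hx5 : x ≤ g1 := inf_le_right.trans (inf_le_right.trans (inf_le_right.trans
    (inf_le_right.trans inf_le_right)))
  have hyF : x ⊓ (a0 ⊔ a1) ⊓ (b0 ⊔ b1) ∈ F := hF.2 _ _ (hF.2 _ _ hxF ea) eb
  rw [hB x a0 a1 b0 b1] at hyF
  have hle : (x ⊓ a0 ⊓ (b0 ⊔ b1)) ⊔ (x ⊓ a1 ⊓ (b0 ⊔ b1))
      ⊔ (x ⊓ b0 ⊓ (a0 ⊔ a1)) ⊔ (x ⊓ b1 ⊓ (a0 ⊔ a1))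
      ⊔ (x ⊓ (a0 ⊔ a1) ⊓ (b0 ⊔ b1) ⊓ (a0 ⊔ b0) ⊓ (a1 ⊔ b1))
      ⊔ (x ⊓ (a0 ⊔ a1) ⊓ (b0 ⊔ b1) ⊓ (a0 ⊔ b1) ⊓ (a1 ⊔ b0)) ≤ b := by
    refine sup_le (sup_le (sup_le (sup_le (sup_le ?_ ?_) ?_) ?_) ?_) ?_
    · exact le_trans inf_le_left (le_trans (inf_le_inf_right _ hx0) hba0)
    · exact le_trans inf_le_left (le_trans (inf_le_inf_right _ hx1) hba1)
    · exact le_trans inf_le_left (le_trans (inf_le_inf_right _ hx2) hbb0)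
    · exact le_trans inf_le_left (le_trans (inf_le_inf_right _ hx3) hbb1)
    · exact le_trans inf_le_left (le_trans (inf_le_inf_right _
        (le_trans inf_le_left (le_trans inf_le_left hx4))) hbg0)
    · exact le_trans inf_le_left (le_trans (inf_le_inf_right _
        (le_trans inf_le_left (le_trans inf_le_left hx5))) hbg1)
  exact hbF (hF.1 _ _ hyF hle)

theorem qpw (hL2 : IdL2 L) (hU : IdU L) (hB : IdB L)
    {F : Set L} {b : L} (hF : IsFilt F) (hbF : b ∉ F)
    (hmax : ∀ x ∉ F, ∃ f ∈ F, f ⊓ x ≤ b)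
    {W : Set L} {e : L} (heF : e ∉ F) (heW : ∀ w ∈ W, w ∉ F → w ⊔ e ∈ F)
    {c p u v : L} (hcF : c ∉ F) (hpc : p ≤ c)
    (hpi : ∀ w ∈ W, (p ⊓ (u ⊔ v)) ⊔ w ∈ F)
    (hs : ∃ w ∈ W, (p ⊓ u) ⊔ w ∉ F) (ht : ∃ w ∈ W, (p ⊓ v) ⊔ w ∉ F) : False := by
  obtain ⟨wu, hwuW, hwu⟩ := hs
  obtain ⟨wv, hwvW, hwv⟩ := ht
  have hpuF : p ⊓ u ∉ F := fun h => hwu (hF.1 _ _ h le_sup_left)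
  have hpvF : p ⊓ v ∉ F := fun h => hwv (hF.1 _ _ h le_sup_left)
  have hwuF : wu ∉ F := fun h => hwu (hF.1 _ _ h le_sup_right)
  have hwvF : wv ∉ F := fun h => hwv (hF.1 _ _ h le_sup_right)
  have hkey : ∃ w ∈ W, (p ⊓ u) ⊔ w ∉ F ∧ (p ⊓ v) ⊔ w ∉ F := by
    by_cases h1 : (p ⊓ u) ⊔ wv ∈ F
    · by_cases h2 : (p ⊓ v) ⊔ wu ∈ F
      · exfalso
        have hwuwv : wu ⊔ wv ∈ F := by
          by_contra hcon
          have h3 : wu ⊔ (p ⊓ u) ∉ F := fun h => hwu (by rwa [sup_comm] at h)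
          exact bond hB hF hbF hmax hwuF hpvF hpuF hwvF
            (by rwa [sup_comm] at h2) h1 h3 hcon
        exact tri hU hF hbF hmax hwuF hwvF heF hwuwv (heW wv hwvW hwvF)
          (heW wu hwuW hwuF)
      · exact ⟨wu, hwuW, hwu, h2⟩
    · exact ⟨wv, hwvW, h1, hwv⟩
  obtain ⟨w, hwW, hw1, hw2⟩ := hkey
  obtain ⟨fc, hfc, hfcb⟩ := hmax c hcF
  obtain ⟨f1, hf1, hf1b⟩ := hmax _ hw1
  obtain ⟨f2, hf2, hf2b⟩ := hmax _ hw2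
  set x := (fc ⊓ (f1 ⊓ f2)) ⊓ ((p ⊓ (u ⊔ v)) ⊔ w) with hxdef
  have hxF : x ∈ F := hF.2 _ _ (hF.2 _ _ hfc (hF.2 _ _ hf1 hf2)) (hpi w hwW)
  have hxfc : x ≤ fc := inf_le_left.trans inf_le_left
  have hxf1 : x ≤ f1 := inf_le_left.trans (inf_le_right.trans inf_le_left)
  have hxf2 : x ≤ f2 := inf_le_left.trans (inf_le_right.trans inf_le_right)
  have hlhs : x ⊓ ((p ⊓ (u ⊔ v)) ⊔ w) = x := inf_eq_left.mpr inf_le_right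
  have hident := hL2 x p w u v
  rw [hlhs] at hident
  have hxb : x ≤ b := by
    rw [hident]
    refine sup_le (sup_le ?_ ?_) ?_
    · exact le_trans inf_le_left (le_trans (inf_le_inf hxfc hpc) hfcb)
    · exact le_trans (inf_le_inf_right _ hxf1) hf1b
    · exact le_trans (inf_le_inf_right _ hxf2) hf2b
  exact hbF (hF.1 _ _ hxF hxb)

theorem exists_prime_filter (hL2 : IdL2 L) (hU : IdU L) (hB : IdB L)
    {F : Set L} {b : L} (hF : IsFilt F) (hbF : b ∉ F)
    (hmax : ∀ x ∉ F, ∃ f ∈ F, f ⊓ x ≤ b)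
    {W : Set L} {e : L} (heF : e ∉ F) (heW : ∀ w ∈ W, w ∉ F → w ⊔ e ∈ F)
    {c : L} (hcT : ∀ w ∈ W, c ⊔ w ∈ F) (hcF : c ∉ F) :
    ∃ P : Set L, IsFilt P ∧ IsPrimeSet P ∧ c ∈ P ∧ ∀ y ∈ P, ∀ w ∈ W, y ⊔ w ∈ F := by
  set T : Set L := {y | ∀ w ∈ W, y ⊔ w ∈ F} with hTdef
  have hTup : ∀ y z : L, y ∈ T → y ≤ z → z ∈ T :=
    fun y z hy hyz w hw => hF.1 _ _ (hy w hw) (sup_le_sup_right hyz w)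
  obtain ⟨P, -, hP⟩ := zorn_subset_nonempty
      {P : Set L | IsFilt P ∧ c ∈ P ∧ P ⊆ T}
      (fun ch hch hchain hchne => by
        refine ⟨⋃₀ ch, ⟨⟨?_, ?_⟩, ?_, ?_⟩, fun s hs => subset_sUnion_of_mem hs⟩
        · rintro x y ⟨s, hs, hxs⟩ hxy
          exact ⟨s, hs, (hch hs).1.1 x y hxs hxy⟩
        · rintro x y ⟨s, hs, hxs⟩ ⟨t, ht, hyt⟩
          rcases hchain.total hs ht with h | h
          · exact ⟨t, ht, (hch ht).1.2 x y (h hxs) hyt⟩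
          · exact ⟨s, hs, (hch hs).1.2 x y hxs (h hyt)⟩
        · obtain ⟨s, hs⟩ := hchne
          exact ⟨s, hs, (hch hs).2.1⟩
        · rintro x ⟨s, hs, hxs⟩
          exact (hch hs).2.2 hxs)
      {y : L | c ≤ y}
      ⟨⟨fun x y hx hxy => hx.trans hxy, fun x y hx hy => le_inf hx hy⟩,
        le_refl c, fun y hy => hTup c y hcT hy⟩
  obtain ⟨⟨hPf, hcP, hPT⟩, hPmax⟩ := hP
  refine ⟨P, hPf, ?_, hcP, fun y hy w hw => hPT hy w hw⟩
  intro u v huv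
  by_contra hcon
  push_neg at hcon
  obtain ⟨huP, hvP⟩ := hcon
  have hext : ∀ z, z ∉ P → ∃ q ∈ P, q ⊓ z ∉ T := by
    intro z hz
    by_contra hcon2
    push_neg at hcon2
    have hsub : P ⊆ {y | ∃ q ∈ P, q ⊓ z ≤ y} := fun y hy => ⟨y, hy, inf_le_left⟩
    have hsub2 : {y | ∃ q ∈ P, q ⊓ z ≤ y} ⊆ P := by
      refine hPmax ⟨⟨?_, ?_⟩, hsub hcP, ?_⟩ hsub
      · rintro y y' ⟨q, hq, hqy⟩ hyy'; exact ⟨q, hq, hqy.trans hyy'⟩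
      · rintro y y' ⟨q, hq, hqy⟩ ⟨q', hq', hqy'⟩
        exact ⟨q ⊓ q', hPf.2 _ _ hq hq', le_inf ((inf_le_inf_right z inf_le_left).trans hqy)
          ((inf_le_inf_right z inf_le_right).trans hqy')⟩
      · rintro y ⟨q, hq, hqy⟩
        exact hTup _ _ (hcon2 q hq) hqy
    exact hz (hsub2 ⟨c, hcP, inf_le_right⟩)
  obtain ⟨q1, hq1, hq1T⟩ := hext u huP
  obtain ⟨q2, hq2, hq2T⟩ := hext v hvP
  set p := (q1 ⊓ q2) ⊓ c with hpdef
  have hpP : p ∈ P := hPf.2 _ _ (hPf.2 _ _ hq1 hq2) hcP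
  have hpc : p ≤ c := inf_le_right
  have hpiT : ∀ w ∈ W, (p ⊓ (u ⊔ v)) ⊔ w ∈ F := fun w hw =>
    hPT (hPf.2 _ _ hpP huv) w hw
  have hpuT : p ⊓ u ∉ T := fun h =>
    hq1T (hTup _ _ h (inf_le_inf_right u (inf_le_left.trans inf_le_left)))
  have hpvT : p ⊓ v ∉ T := fun h =>
    hq2T (hTup _ _ h (inf_le_inf_right v (inf_le_left.trans inf_le_right)))
  simp only [hTdef, mem_setOf_eq] at hpuT hpvT
  push_neg at hpuT hpvT
  exact qpw hL2 hU hB hF hbF hmax heF heW hcF hpc hpiT hpuT hpvT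

end SWAux

/-- The separating data used to build one component of the poset `Γ`. -/
structure Separator (L : Type u_aux) [Lattice L] : Type u_aux where
  F : Set L
  bots : Set (Set L)
  tops : Set (Set L)
  hF : IsFilt F
  hFne : F.Nonempty
  hbots : ∀ A ∈ bots, IsFilt A ∧ IsPrimeSet A ∧ A.Nonempty
  htops : ∀ B ∈ tops, IsFilt B ∧ IsPrimeSet B ∧ B.Nonempty
  hconv : ∀ A ∈ bots, ∀ B ∈ tops, A ∩ B ⊆ F
  hsplit : ∀ x y : L, x ⊔ y ∈ F → x ∈ F ∨ y ∈ F ∨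
      ((∃ A ∈ bots, x ∈ A ∨ y ∈ A) ∧ (∃ B ∈ tops, x ∈ B ∨ y ∈ B))
  hbot0 : ∀ z : L, IsBot z → z ∉ F ∧ (∀ A ∈ bots, z ∉ A) ∧ (∀ B ∈ tops, z ∉ B)

section SWAux2
variable {L : Type*} [Lattice L]

theorem sep_exists (hL2 : IdL2 L) (hU : IdU L) (hB : IdB L) {a b : L} (hab : ¬ a ≤ b) :
    ∃ σ : Separator L, a ∈ σ.F ∧ b ∉ σ.F := by
  obtain ⟨F, hF, haF, hbF, hmax⟩ := exists_max_filter hab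
  by_cases hprime : ∀ x y : L, x ⊔ y ∈ F → x ∈ F ∨ y ∈ F
  · exact ⟨⟨F, ∅, ∅, hF, ⟨a, haF⟩, by simp, by simp, by simp,
      fun x y h => (hprime x y h).imp id Or.inl,
      fun z hz => ⟨fun hzF => hbF (hF.1 _ _ hzF (hz b)), by simp, by simp⟩⟩, haF, hbF⟩
  · push_neg at hprime
    obtain ⟨a0, a1, he01, ha0, ha1⟩ := hprime
    set B0 : Set L := {w | w ∉ F ∧ w ⊔ a0 ∈ F} with hB0
    set SA : Set L := {y | ∀ w ∈ B0, y ⊔ w ∈ F} with hSA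
    set SB : Set L := {y | ∀ v ∈ SA, y ⊔ v ∈ F} with hSB
    have ha1B0 : a1 ∈ B0 := ⟨ha1, by rwa [sup_comm] at he01⟩
    have hedge_mem : ∀ x y : L, x ⊔ y ∈ F → x ∉ F → y ∉ F →
        (x ⊔ a0 ∈ F ∨ x ⊔ a1 ∈ F) := by
      intro x y hxy hx hy
      by_contra hcon; push_neg at hcon
      exact bond hB hF hbF hmax hx hy ha0 ha1 hxy he01 hcon.1 hcon.2
    have hnotboth : ∀ x : L, x ∉ F → x ⊔ a0 ∈ F → x ⊔ a1 ∈ F → False := by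
      intro x hx h0 h1
      exact tri hU hF hbF hmax hx ha0 ha1 h0 he01 h1
    have hA0SA : ∀ x : L, x ∉ F → x ⊔ a1 ∈ F → x ∈ SA := by
      intro x hx hxa1 w hw
      by_contra hxw
      have hxa0 : x ⊔ a0 ∉ F := fun h => hnotboth x hx h hxa1
      exact bond hB hF hbF hmax hx ha1 hw.1 ha0 hxa1 hw.2 hxw hxa0
    have ha0SA : a0 ∈ SA := hA0SA a0 ha0 he01
    have hB0SB : ∀ x : L, x ∈ B0 → x ∈ SB := fun x hx v hv => by
      rw [sup_comm]; exact hv x hx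
    set bots : Set (Set L) := {P | IsFilt P ∧ IsPrimeSet P ∧ P.Nonempty ∧ P ⊆ SA}
      with hbotsdef
    set tops : Set (Set L) := {P | IsFilt P ∧ IsPrimeSet P ∧ P.Nonempty ∧ P ⊆ SB}
      with htopsdef
    have hexA : ∀ x : L, x ∉ F → x ⊔ a1 ∈ F → ∃ P ∈ bots, x ∈ P := by
      intro x hx hxa1
      obtain ⟨P, hPf, hPp, hxP, hPT⟩ := exists_prime_filter hL2 hU hB hF hbF hmax
        (W := B0) (e := a0) ha0 (fun w hw _ => hw.2) (hA0SA x hx hxa1) hx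
      exact ⟨P, ⟨hPf, hPp, ⟨x, hxP⟩, fun y hy w hw => hPT y hy w hw⟩, hxP⟩
    have hexB : ∀ x : L, x ∉ F → x ⊔ a0 ∈ F → ∃ P ∈ tops, x ∈ P := by
      intro x hx hxa0
      obtain ⟨P, hPf, hPp, hxP, hPT⟩ := exists_prime_filter hL2 hU hB hF hbF hmax
        (W := SA) (e := a1) ha1 (fun w hw _ => hw a1 ha1B0) (hB0SB x ⟨hx, hxa0⟩) hx
      exact ⟨P, ⟨hPf, hPp, ⟨x, hxP⟩, fun y hy v hv => hPT y hy v hv⟩, hxP⟩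
    have hSASB : ∀ x : L, x ∈ SA → x ∈ SB → x ∈ F := by
      intro x hxA hxB
      have h := hxB x hxA
      rwa [sup_idem] at h
    refine ⟨⟨F, bots, tops, hF, ⟨a, haF⟩,
      fun A hA => ⟨hA.1, hA.2.1, hA.2.2.1⟩,
      fun B hB' => ⟨hB'.1, hB'.2.1, hB'.2.2.1⟩, ?_, ?_, ?_⟩, haF, hbF⟩
    · rintro A hA B hB' x ⟨hxA, hxB⟩
      exact hSASB x (hA.2.2.2 hxA) (hB'.2.2.2 hxB)
    · intro x y hxy
      by_cases hx : x ∈ F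
      · exact Or.inl hx
      by_cases hy : y ∈ F
      · exact Or.inr (Or.inl hy)
      have hyx : y ⊔ x ∈ F := by rwa [sup_comm] at hxy
      refine Or.inr (Or.inr ⟨?_, ?_⟩)
      · rcases hedge_mem x y hxy hx hy with h | h
        · rcases hedge_mem y x hyx hy hx with h' | h'
          · exact absurd (tri hU hF hbF hmax hx hy ha0 hxy h' h) (fun f => f)
          · obtain ⟨P, hP, hyP⟩ := hexA y hy h'
            exact ⟨P, hP, Or.inr hyP⟩
        · obtain ⟨P, hP, hxP⟩ := hexA x hx h
          exact ⟨P, hP, Or.inl hxP⟩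
      · rcases hedge_mem x y hxy hx hy with h | h
        · obtain ⟨P, hP, hxP⟩ := hexB x hx h
          exact ⟨P, hP, Or.inl hxP⟩
        · rcases hedge_mem y x hyx hy hx with h' | h'
          · obtain ⟨P, hP, hyP⟩ := hexB y hy h'
            exact ⟨P, hP, Or.inr hyP⟩
          · exact absurd (tri hU hF hbF hmax hx hy ha1 hxy h' h) (fun f => f)
    · intro z hz
      refine ⟨fun h => hbF (hF.1 _ _ h (hz b)), ?_, ?_⟩
      · rintro A hA hzA
        have hzSA : z ∈ SA := hA.2.2.2 hzA
        have h1 : z ⊔ a1 ∈ F := hzSA a1 ha1B0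
        rw [sup_eq_right.mpr (hz a1)] at h1
        exact ha1 h1
      · rintro B hB' hzB
        have hzSB : z ∈ SB := hB'.2.2.2 hzB
        have h1 : z ⊔ a0 ∈ F := hzSB a0 ha0SA
        rw [sup_eq_right.mpr (hz a0)] at h1
        exact ha0 h1

end SWAux2

structure Gam (L : Type u_aux) [Lattice L] : Type u_aux where
  sep : Separator L
  pt : PIJ (↥sep.bots) (↥sep.tops)


section SWAux3
variable {L : Type u_aux} [Lattice L]

namespace Gam

instance : PartialOrder (Gam L) where
  le x y := x = y ∨ (x.sep = y.sep ∧ PIJ.rank x.pt < PIJ.rank y.pt)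
  le_refl x := Or.inl rfl
  le_trans x y z hxy hyz := by
    rcases hxy with rfl | ⟨h1, h2⟩
    · exact hyz
    · rcases hyz with rfl | ⟨h3, h4⟩
      · exact Or.inr ⟨h1, h2⟩
      · exact Or.inr ⟨h1.trans h3, h2.trans h4⟩
  le_antisymm x y hxy hyx := by
    rcases hxy with rfl | ⟨h1, h2⟩
    · rfl
    · rcases hyx with rfl | ⟨h3, h4⟩
      · rfl
      · omega

theorem le_def {x y : Gam L} :
    x ≤ y ↔ (x = y ∨ (x.sep = y.sep ∧ PIJ.rank x.pt < PIJ.rank y.pt)) := Iff.rfl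

def U (x : Gam L) : Set L :=
  Sum.elim (fun A => (A.1 : Set L)) (Sum.elim (fun _ => x.sep.F) (fun B => B.1)) x.pt

theorem U_filt (x : Gam L) : IsFilt x.U := by
  obtain ⟨σ, pt⟩ := x
  rcases pt with A | (u | B)
  · exact (σ.hbots A.1 A.2).1
  · exact σ.hF
  · exact (σ.htops B.1 B.2).1

theorem U_ne (x : Gam L) : x.U.Nonempty := by
  obtain ⟨σ, pt⟩ := x
  rcases pt with A | (u | B)
  · exact (σ.hbots A.1 A.2).2.2
  · exact σ.hFne
  · exact (σ.htops B.1 B.2).2.2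

theorem fmap_conv (a : L) : OrdConnected {x : Gam L | a ∈ U x} := by
  constructor
  rintro x hx y hy z ⟨hxz, hzy⟩
  rcases hxz with rfl | ⟨h1, h2⟩
  · exact hx
  rcases hzy with rfl | ⟨h3, h4⟩
  · exact hy
  obtain ⟨σx, px⟩ := x
  obtain ⟨σz, pz⟩ := z
  obtain ⟨σy, py⟩ := y
  simp only at h1 h3
  subst h1; subst h3
  rcases px with A | (u | B) <;> rcases pz with A' | (u' | B') <;>
    rcases py with A'' | (u'' | B'') <;>
    simp only [PIJ.rank, Sum.elim_inl, Sum.elim_inr, U, mem_setOf_eq] at h2 h4 hx hy ⊢ <;>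
    try omega
  exact σx.hconv A.1 A.2 B''.1 B''.2 ⟨hx, hy⟩

end Gam

noncomputable def fmap (a : L) : Co (Gam L) := ⟨{x | a ∈ Gam.U x}, Gam.fmap_conv a⟩

theorem Co.le_def' {P : Type*} [PartialOrder P] {X Y : Co P} : X ≤ Y ↔ X.1 ⊆ Y.1 := Iff.rfl

theorem fmap_mono {a b : L} (h : a ≤ b) : fmap (L := L) a ≤ fmap b :=
  Co.le_def'.mpr (fun x hx => (Gam.U_filt x).1 a b hx h)

theorem fmap_inf (a b : L) : fmap (L := L) (a ⊓ b) = fmap a ⊓ fmap b := by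
  apply le_antisymm
  · exact le_inf (fmap_mono inf_le_left) (fmap_mono inf_le_right)
  · refine Co.le_def'.mpr (fun x hx => ?_)
    have h1 : x ∈ (fmap a).1 := Co.le_def'.mp inf_le_left hx
    have h2 : x ∈ (fmap b).1 := Co.le_def'.mp inf_le_right hx
    exact (Gam.U_filt x).2 a b h1 h2

theorem fmap_sup (a b : L) : fmap (L := L) (a ⊔ b) = fmap a ⊔ fmap b := by
  apply le_antisymm
  · refine Co.le_def'.mpr (fun x hx => ?_)
    have hZ := (fmap a ⊔ fmap b).2
    have hZa : (fmap a).1 ⊆ (fmap a ⊔ fmap b).1 := Co.le_def'.mp le_sup_left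
    have hZb : (fmap b).1 ⊆ (fmap a ⊔ fmap b).1 := Co.le_def'.mp le_sup_right
    obtain ⟨σ, pt⟩ := x
    simp only [fmap, mem_setOf_eq] at hx
    rcases pt with A | (u | B)
    · simp only [Gam.U, Sum.elim_inl] at hx
      rcases (σ.hbots A.1 A.2).2.1 a b hx with h | h
      · exact hZa h
      · exact hZb h
    · simp only [Gam.U, Sum.elim_inr, Sum.elim_inl] at hx
      rcases σ.hsplit a b hx with h | h | ⟨⟨A, hA, hmA⟩, ⟨B, hB, hmB⟩⟩
      · exact hZa h
      · exact hZb h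
      · have hxb : (⟨σ, Sum.inl ⟨A, hA⟩⟩ : Gam L) ∈ (fmap a ⊔ fmap b).1 := by
          rcases hmA with h | h
          · exact hZa h
          · exact hZb h
        have hxt : (⟨σ, Sum.inr (Sum.inr ⟨B, hB⟩)⟩ : Gam L) ∈ (fmap a ⊔ fmap b).1 := by
          rcases hmB with h | h
          · exact hZa h
          · exact hZb h
        have hle1 : (⟨σ, Sum.inl ⟨A, hA⟩⟩ : Gam L) ≤ ⟨σ, Sum.inr (Sum.inl u)⟩ :=
          Or.inr ⟨rfl, by simp [PIJ.rank]⟩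
        have hle2 : (⟨σ, Sum.inr (Sum.inl u)⟩ : Gam L) ≤ ⟨σ, Sum.inr (Sum.inr ⟨B, hB⟩)⟩ :=
          Or.inr ⟨rfl, by simp [PIJ.rank]⟩
        exact hZ.out hxb hxt ⟨hle1, hle2⟩
    · simp only [Gam.U, Sum.elim_inr] at hx
      rcases (σ.htops B.1 B.2).2.1 a b hx with h | h
      · exact hZa h
      · exact hZb h
  · exact sup_le (fmap_mono le_sup_left) (fmap_mono le_sup_right)

theorem fmap_injective (hL2 : IdL2 L) (hU : IdU L) (hB : IdB L) :
    Function.Injective (fmap (L := L)) := by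
  intro a b hab
  by_contra hne
  have h : ¬ a ≤ b ∨ ¬ b ≤ a := by
    by_contra h
    push_neg at h
    exact hne (le_antisymm h.1 h.2)
  rcases h with h | h
  · obtain ⟨σ, haσ, hbσ⟩ := sep_exists hL2 hU hB h
    have : (⟨σ, Sum.inr (Sum.inl ())⟩ : Gam L) ∈ (fmap a).1 := haσ
    rw [hab] at this
    exact hbσ this
  · obtain ⟨σ, hbσ, haσ⟩ := sep_exists hL2 hU hB h
    have : (⟨σ, Sum.inr (Sum.inl ())⟩ : Gam L) ∈ (fmap b).1 := hbσ
    rw [← hab] at this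
    exact haσ this

theorem fmap_bot {z : L} (hz : IsBot z) : IsBot (fmap (L := L) z) := by
  intro Y
  refine Co.le_def'.mpr (fun x hx => ?_)
  exfalso
  obtain ⟨σ, pt⟩ := x
  simp only [fmap, mem_setOf_eq] at hx
  obtain ⟨h1, h2, h3⟩ := σ.hbot0 z hz
  rcases pt with A | (u | B)
  · exact h2 A.1 A.2 hx
  · exact h1 hx
  · exact h3 B.1 B.2 hx

theorem fmap_top {t : L} (ht : IsTop t) : IsTop (fmap (L := L) t) := by
  intro Y
  refine Co.le_def'.mpr (fun x hx => ?_)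
  obtain ⟨w, hw⟩ := Gam.U_ne x
  exact (Gam.U_filt x).1 w t hw (ht w)

theorem rank_lt3 {I J : Type*} (p : PIJ I J) : PIJ.rank p < 3 := by
  rcases p with _ | (_ | _) <;> simp [PIJ.rank]

theorem Gam.lt_iff {x y : Gam L} :
    x < y ↔ x.sep = y.sep ∧ PIJ.rank x.pt < PIJ.rank y.pt := by
  constructor
  · intro h
    rcases lt_iff_le_and_ne.mp h with ⟨hle, hne⟩
    rcases hle with rfl | h2
    · exact absurd rfl hne
    · exact h2
  · rintro ⟨h1, h2⟩
    rw [lt_iff_le_and_ne]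
    refine ⟨Or.inr ⟨h1, h2⟩, ?_⟩
    rintro rfl
    exact lt_irrefl _ h2

theorem chain_rank_injOn {C : Set (Gam L)} (hC : IsChain (· ≤ ·) C) :
    Set.InjOn (fun x : Gam L => PIJ.rank x.pt) C := by
  intro x hx y hy hxy
  by_contra hne
  rcases hC hx hy hne with h | h
  · rcases h with rfl | ⟨_, h2⟩
    · exact hne rfl
    · simp only at hxy; omega
  · rcases h with h | ⟨_, h2⟩
    · exact hne h.symm
    · simp only at hxy; omega

theorem gam_lengthLE : lengthLE (Gam L) 2 := by
  intro C hC
  have hinj := chain_rank_injOn hC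
  calc C.card = (C.image (fun x : Gam L => PIJ.rank x.pt)).card :=
        (Finset.card_image_of_injOn hinj).symm
    _ ≤ (Finset.range 3).card := by
        refine Finset.card_le_card ?_
        intro n hn
        simp only [Finset.mem_image] at hn
        obtain ⟨x, _, rfl⟩ := hn
        exact Finset.mem_range.mpr (rank_lt3 x.pt)
    _ = 3 := Finset.card_range 3

theorem gam_chain_finite (C : Set (Gam L)) (hC : IsChain (· ≤ ·) C) : C.Finite := by
  refine Set.Finite.of_finite_image ?_ (chain_rank_injOn hC)
  refine (Set.finite_Iio 3).subset ?_
  rintro n ⟨x, _, rfl⟩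
  exact rank_lt3 x.pt

/-- the edge relation -/
def E (x y : Gam L) : Prop := x ⋖ y ∨ y ⋖ x

theorem cov_facts {x y : Gam L} (h : x ⋖ y) :
    x.sep = y.sep ∧ ((PIJ.rank x.pt = 0 ∧ PIJ.rank y.pt = 1) ∨
      (PIJ.rank x.pt = 1 ∧ PIJ.rank y.pt = 2)) := by
  obtain ⟨hsep, hrank⟩ := Gam.lt_iff.mp h.1
  refine ⟨hsep, ?_⟩
  have h3x := rank_lt3 x.pt
  have h3y := rank_lt3 y.pt
  by_contra hcon
  have h02 : PIJ.rank x.pt = 0 ∧ PIJ.rank y.pt = 2 := by omega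
  have hz1 : x < ⟨x.sep, Sum.inr (Sum.inl ())⟩ := by
    refine Gam.lt_iff.mpr ⟨rfl, ?_⟩
    show PIJ.rank x.pt < PIJ.rank (Sum.inr (Sum.inl ()) : PIJ (↥x.sep.bots) (↥x.sep.tops))
    rw [h02.1]
    exact Nat.zero_lt_one
  have hz2 : (⟨x.sep, Sum.inr (Sum.inl ())⟩ : Gam L) < y := by
    refine Gam.lt_iff.mpr ⟨hsep, ?_⟩
    show PIJ.rank (Sum.inr (Sum.inl ()) : PIJ (↥x.sep.bots) (↥x.sep.tops)) < PIJ.rank y.pt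
    rw [h02.2]
    exact Nat.one_lt_two
  exact h.2 hz1 hz2

theorem E_sep {x y : Gam L} (h : E x y) : x.sep = y.sep := by
  rcases h with h | h
  · exact (cov_facts h).1
  · exact ((cov_facts h).1).symm

theorem E_ne {x y : Gam L} (h : E x y) : x ≠ y := by
  rcases h with h | h
  · exact h.1.ne
  · exact h.1.ne'

theorem E_mid {x y : Gam L} (h : E x y) : PIJ.rank x.pt = 1 ∨ PIJ.rank y.pt = 1 := by
  rcases h with h | h
  · rcases (cov_facts h).2 with ⟨h1, h2⟩ | ⟨h1, h2⟩
    · exact Or.inr h2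
    · exact Or.inl h1
  · rcases (cov_facts h).2 with ⟨h1, h2⟩ | ⟨h1, h2⟩
    · exact Or.inl h2
    · exact Or.inr h1

theorem mid_eq {x y : Gam L} (hsep : x.sep = y.sep) (hx : PIJ.rank x.pt = 1)
    (hy : PIJ.rank y.pt = 1) : x = y := by
  obtain ⟨σ, p⟩ := x
  obtain ⟨τ, q⟩ := y
  simp only at hsep
  subst hsep
  rcases p with A | (u | B) <;> simp [PIJ.rank] at hx
  rcases q with A | (u' | B) <;> simp [PIJ.rank] at hy
  rfl

theorem mid_of_two {x y z : Gam L} (h1 : E x y) (h2 : E y z) (hxz : x ≠ z) :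
    PIJ.rank y.pt = 1 := by
  by_contra hy
  have hx : PIJ.rank x.pt = 1 := (E_mid h1).resolve_right hy
  have hz : PIJ.rank z.pt = 1 := (E_mid h2).resolve_left hy
  exact hxz (mid_eq ((E_sep h1).trans (E_sep h2)) hx hz)

theorem shape_lemma (a b : Gam L) (l : List (Gam L)) (hn : l.Nodup)
    (h1 : l.head? = some a) (h2 : l.getLast? = some b) (hc : l.Chain' (E (L := L))) :
    (l = [a] ∧ a = b) ∨ (l = [a, b] ∧ E a b ∧ a ≠ b) ∨
    (∃ m, l = [a, m, b] ∧ E a m ∧ E m b ∧ PIJ.rank m.pt = 1 ∧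
      a ≠ m ∧ m ≠ b ∧ a ≠ b) := by
  rcases l with _ | ⟨x, _ | ⟨y, _ | ⟨z, _ | ⟨w, rest⟩⟩⟩⟩
  · simp at h1
  · simp only [List.head?_cons, Option.some.injEq] at h1
    simp only [List.getLast?_singleton, Option.some.injEq] at h2
    subst h1
    exact Or.inl ⟨rfl, h2⟩
  · simp only [List.head?_cons, Option.some.injEq] at h1
    simp only [List.getLast?_cons_cons, List.getLast?_singleton, Option.some.injEq] at h2
    subst h1; subst h2
    simp only [List.Chain', List.isChain_cons_cons, List.isChain_singleton, and_true] at hc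
    have hxy : x ≠ y := by intro h; subst h; simp at hn
    exact Or.inr (Or.inl ⟨rfl, hc, hxy⟩)
  · simp only [List.head?_cons, Option.some.injEq] at h1
    simp only [List.getLast?_cons_cons, List.getLast?_singleton, Option.some.injEq] at h2
    subst h1; subst h2
    simp only [List.Chain', List.isChain_cons_cons, List.isChain_singleton, and_true] at hc
    have hxy : x ≠ y := by intro h; subst h; simp at hn
    have hxz : x ≠ z := by intro h; subst h; simp at hn
    have hyz : y ≠ z := by intro h; subst h; simp at hn
    have hmid : PIJ.rank y.pt = 1 := mid_of_two hc.1 hc.2 hxz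
    exact Or.inr (Or.inr ⟨y, rfl, hc.1, hc.2, hmid, hxy, hyz, hxz⟩)
  · exfalso
    simp only [List.Chain', List.isChain_cons_cons] at hc
    have hE1 : E x y := hc.1
    have hE2 : E y z := hc.2.1
    have hE3 : E z w := hc.2.2.1
    have hxz : x ≠ z := by intro h; subst h; simp at hn
    have hyw : y ≠ w := by intro h; subst h; simp at hn
    have hyz : y ≠ z := by intro h; subst h; simp at hn
    have hy1 : PIJ.rank y.pt = 1 := mid_of_two hE1 hE2 hxz
    have hz1 : PIJ.rank z.pt = 1 := mid_of_two hE2 hE3 hyw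
    exact hyz (mid_eq (E_sep hE2) hy1 hz1)

theorem gam_treeLike : TreeLike (Gam L) := by
  constructor
  · exact fun C hC _ _ => gam_chain_finite C hC
  · intro a b l₁ l₂ hn₁ hh₁ hl₁ hc₁ hn₂ hh₂ hl₂ hc₂
    rcases shape_lemma a b l₁ hn₁ hh₁ hl₁ hc₁ with ⟨he₁, hab₁⟩ | ⟨he₁, hE₁, hab₁⟩ |
      ⟨m, he₁, hE1a, hE1b, hm1, hne1a, hne1b, hab₁⟩ <;>
      rcases shape_lemma a b l₂ hn₂ hh₂ hl₂ hc₂ with ⟨he₂, hab₂⟩ | ⟨he₂, hE₂, hab₂⟩ |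
        ⟨m', he₂, hE2a, hE2b, hm2, hne2a, hne2b, hab₂⟩
    · rw [he₁, he₂]
    · exact absurd hab₁ hab₂
    · exact absurd hab₁ hab₂
    · exact absurd hab₂ hab₁
    · rw [he₁, he₂]
    · exfalso
      rcases E_mid hE₁ with h | h
      · exact hne2a (mid_eq (E_sep hE2a) h hm2)
      · exact hne2b (mid_eq (E_sep hE2b) hm2 h)
    · exact absurd hab₂ hab₁
    · exfalso
      rcases E_mid hE₂ with h | h
      · exact hne1a (mid_eq (E_sep hE1a) h hm1)
      · exact hne1b (mid_eq (E_sep hE1b) hm1 h)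
    · rw [he₁, he₂]
      have hmm : m = m' := mid_eq ((E_sep hE1a).symm.trans (E_sep hE2a)) hm1 hm2
      rw [hmm]

theorem separator_finite [Finite L] : Finite (Separator L) := by
  have hinj : Function.Injective (fun σ : Separator L => (σ.F, σ.bots, σ.tops)) := by
    rintro ⟨F1, b1, t1, _, _, _, _, _, _, _⟩ ⟨F2, b2, t2, _, _, _, _, _, _, _⟩ h
    simp only [Prod.mk.injEq] at h
    obtain ⟨h1, h2, h3⟩ := h
    subst h1; subst h2; subst h3
    rfl
  exact Finite.of_injective _ hinj

theorem gam_finite [Finite L] : Finite (Gam L) := by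
  haveI := separator_finite (L := L)
  have hinj : Function.Injective (fun x : Gam L =>
      (x.sep, (Sum.elim (fun A : ↥x.sep.bots => (Sum.inl A.1 : Set L ⊕ (Unit ⊕ Set L)))
        (Sum.elim (fun _ : Unit => Sum.inr (Sum.inl ()))
          (fun B : ↥x.sep.tops => Sum.inr (Sum.inr B.1))) x.pt))) := by
    rintro ⟨σ, p⟩ ⟨τ, q⟩ h
    simp only [Prod.mk.injEq] at h
    obtain ⟨h1, h2⟩ := h
    subst h1
    have hpq : p = q := by
      rcases p with A | (u | B) <;> rcases q with A' | (u' | B') <;>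
        simp only [Sum.elim_inl, Sum.elim_inr, Sum.inl.injEq, Sum.inr.injEq] at h2 <;>
        first
          | exact congrArg Sum.inl (Subtype.ext h2)
          | exact congrArg (fun t => Sum.inr (Sum.inr t)) (Subtype.ext h2)
          | (cases u; cases u'; rfl)
          | exact absurd h2 (by simp)
    rw [hpq]
  exact Finite.of_injective _ hinj

end SWAux3

theorem stmt2.{u} (L : Type u) [Lattice L] (hL2 : IdL2 L) (hU : IdU L) (hB : IdB L) :
    ∃ (Γ : Type u) (_ : PartialOrder Γ), TreeLike Γ ∧ lengthLE Γ 2 ∧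
      (∃ f : LatticeHom L (Co Γ), Function.Injective f ∧
        (∀ z : L, IsBot z → IsBot (f z)) ∧ (∀ z : L, IsTop z → IsTop (f z))) ∧
      (Finite L → Finite Γ) := by
  refine ⟨Gam L, inferInstance, gam_treeLike, gam_lengthLE, ?_, ?_⟩
  · refine ⟨⟨⟨fmap, fun a b => fmap_sup a b⟩, fun a b => fmap_inf a b⟩,
      fmap_injective hL2 hU hB, fun z hz => fmap_bot hz, fun t ht => fmap_top ht⟩
  · intro h
    haveI := h
    exact gam_finite
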